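/- Let G=(V,E) be a finite graph of maximum degree 3, let n be a positive integer, and let x be a real number. If the spins (s_i)_{i∈V} are i.i.d. with the face-cubic a priori measure and M = Σ_{i∈V} s_i, then E[ |M|² ∏_{ij∈E}(1 + n x s_i·s_j) ] = Σ_{(A,u,v)∈S(G)} x^{|A|} n^{c(A)}. -/

import Mathlib

open SimpleGraph

variable {V : Type*}

/-- Degree of a vertex `v` in the spanning subgraph `(V, A)`:
the number of edges of `A` incident to `v`. -/
def degIn [DecidableEq V] (A : Finset (Sym2 V)) (v : V) : ℕ :=
  (A.filter fun e => v ∈ e).card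

/-- `A ∈ S_{u,v}(G)`: for `u ≠ v`, exactly `u` and `v` have odd degree in `(V, A)`;
for `u = v` this says that all degrees are even, i.e. `S_{v,v}(G) = C(G)`. -/
def inSuv [DecidableEq V] (A : Finset (Sym2 V)) (u v : V) : Prop :=
  ∀ w, Odd (degIn A w) ↔ (u ≠ v ∧ (w = u ∨ w = v))

/-- The cyclomatic number of the spanning subgraph `(V, A)`: the minimum number of edges
whose removal from `(V, A)` leaves an acyclic graph. -/
noncomputable def cyclomatic [DecidableEq V] (A : Finset (Sym2 V)) : ℕ :=
  sInf {k | ∃ B ⊆ A, B.card = k ∧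
    (SimpleGraph.fromEdgeSet ((A \ B : Finset (Sym2 V)) : Set (Sym2 V))).IsAcyclic}

open scoped Classical in
/-- The state space `S(G)` of the worm dynamics: all ordered triples `(A, u, v)` with
`A ⊆ E` and `A ∈ S_{u,v}(G)`. -/
noncomputable def SGfinset [Fintype V] [DecidableEq V] (G : SimpleGraph V)
    [DecidableRel G.Adj] : Finset (Finset (Sym2 V) × V × V) :=
  (G.edgeFinset.powerset ×ˢ Finset.univ ×ˢ Finset.univ).filter
    fun p => inSuv p.1 p.2.1 p.2.2

/-- The face-cubic spin associated to a pair `(α, ±)`: the unit vector `± e_α ∈ ℝⁿ`. -/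
def fcSpin (n : ℕ) (p : Fin n × Bool) : Fin n → ℝ :=
  Pi.single p.1 (if p.2 then 1 else -1)


section Aux
open Finset
variable [Fintype V] [DecidableEq V]

set_option linter.unusedSectionVars false

noncomputable instance (G : SimpleGraph V) : Fintype G.ConnectedComponent :=
  Fintype.ofFinite _

/-- number of connected components of the spanning subgraph with edge set S -/
noncomputable def kk (S : Finset (Sym2 V)) : ℕ :=
  Fintype.card (SimpleGraph.fromEdgeSet (S : Set (Sym2 V))).ConnectedComponent

lemma kk_empty : kk (∅ : Finset (Sym2 V)) = Fintype.card V := by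
  classical
  unfold kk
  have h : (SimpleGraph.fromEdgeSet ((∅ : Finset (Sym2 V)) : Set (Sym2 V))) = ⊥ := by
    simp
  rw [h]
  refine Fintype.card_congr (Equiv.symm ⟨fun v => (⊥ : SimpleGraph V).connectedComponentMk v, ?_, ?_, ?_⟩)
  · exact ConnectedComponent.lift id (fun v w p hp => by
      cases p with
      | nil => rfl
      | cons h _ => exact absurd h (by simp))
  · intro v; rfl
  · intro c
    refine c.ind (fun v => ?_)
    rfl

lemma kk_anti {S T : Finset (Sym2 V)} (h : S ⊆ T) : kk T ≤ kk S := by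
  classical
  have hle : SimpleGraph.fromEdgeSet (S : Set (Sym2 V)) ≤ fromEdgeSet (T : Set (Sym2 V)) :=
    fromEdgeSet_mono (by exact_mod_cast h)
  exact Fintype.card_le_of_surjective
    (ConnectedComponent.map (Hom.ofLE hle))
    (fun c => c.ind fun v => ⟨(fromEdgeSet (S : Set (Sym2 V))).connectedComponentMk v, rfl⟩)

section Erase
variable {S : Finset (Sym2 V)} {a b : V}

lemma reach_erase_iff (hab : a ≠ b) (he : s(a,b) ∈ S) {x y : V} :
    (fromEdgeSet (S : Set (Sym2 V))).Reachable x y ↔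
      ((fromEdgeSet ((S.erase s(a,b) : Finset (Sym2 V)) : Set (Sym2 V))).Reachable x y ∨
      ((fromEdgeSet ((S.erase s(a,b) : Finset (Sym2 V)) : Set (Sym2 V))).Reachable x a ∧
        (fromEdgeSet ((S.erase s(a,b) : Finset (Sym2 V)) : Set (Sym2 V))).Reachable b y) ∨
      ((fromEdgeSet ((S.erase s(a,b) : Finset (Sym2 V)) : Set (Sym2 V))).Reachable x b ∧
        (fromEdgeSet ((S.erase s(a,b) : Finset (Sym2 V)) : Set (Sym2 V))).Reachable a y)) := by
  classical
  set G' := fromEdgeSet ((S.erase s(a,b) : Finset (Sym2 V)) : Set (Sym2 V)) with hG'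
  have hle : G' ≤ fromEdgeSet (S : Set (Sym2 V)) := by
    apply fromEdgeSet_mono; intro e heq; simp only [Finset.coe_erase, Set.mem_diff] at heq
    exact_mod_cast heq.1
  have hadjab : (fromEdgeSet (S : Set (Sym2 V))).Reachable a b :=
    ((fromEdgeSet_adj _).2 ⟨he, hab⟩).reachable
  constructor
  · rintro ⟨w⟩
    induction w with
    | nil => exact Or.inl (Reachable.refl _)
    | @cons x c y h p ih =>
      have hadj := (fromEdgeSet_adj _).1 h
      by_cases hcase : s(x, c) = s(a, b)
      · rw [Sym2.eq_iff] at hcase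
        rcases hcase with ⟨rfl, rfl⟩ | ⟨rfl, rfl⟩
        · rcases ih with h1 | ⟨h1, h2⟩ | ⟨h1, h2⟩
          · exact Or.inr (Or.inl ⟨Reachable.refl _, h1⟩)
          · exact Or.inr (Or.inl ⟨Reachable.refl _, h2⟩)
          · exact Or.inl h2
        · rcases ih with h1 | ⟨h1, h2⟩ | ⟨h1, h2⟩
          · exact Or.inr (Or.inr ⟨Reachable.refl _, h1⟩)
          · exact Or.inl h2
          · exact Or.inr (Or.inr ⟨Reachable.refl _, h2⟩)
      · have hadj' : G'.Adj x c := (fromEdgeSet_adj _).2 ⟨by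
          simp only [Finset.coe_erase, Set.mem_diff, Set.mem_singleton_iff]
          exact ⟨hadj.1, hcase⟩, hadj.2⟩
        rcases ih with h1 | ⟨h1, h2⟩ | ⟨h1, h2⟩
        · exact Or.inl (hadj'.reachable.trans h1)
        · exact Or.inr (Or.inl ⟨hadj'.reachable.trans h1, h2⟩)
        · exact Or.inr (Or.inr ⟨hadj'.reachable.trans h1, h2⟩)
  · rintro (h1 | ⟨h1, h2⟩ | ⟨h1, h2⟩)
    · exact h1.mono hle
    · exact ((h1.mono hle).trans hadjab).trans (h2.mono hle)
    · exact ((h1.mono hle).trans hadjab.symm).trans (h2.mono hle)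

lemma kk_nonbridge (hab : a ≠ b) (he : s(a,b) ∈ S)
    (hr : (fromEdgeSet ((S.erase s(a,b) : Finset (Sym2 V)) : Set (Sym2 V))).Reachable a b) :
    kk S = kk (S.erase s(a,b)) := by
  classical
  have hiff : ∀ x y : V, (fromEdgeSet (S : Set (Sym2 V))).Reachable x y ↔
      (fromEdgeSet ((S.erase s(a,b) : Finset (Sym2 V)) : Set (Sym2 V))).Reachable x y := by
    intro x y
    rw [reach_erase_iff hab he]
    constructor
    · rintro (h1 | ⟨h1, h2⟩ | ⟨h1, h2⟩)
      · exact h1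
      · exact (h1.trans hr).trans h2
      · exact (h1.trans hr.symm).trans h2
    · exact Or.inl
  apply le_antisymm
  · exact kk_anti (Finset.erase_subset _ _)
  · refine Fintype.card_le_of_surjective
      (Quot.lift (fun v => (fromEdgeSet ((S.erase s(a,b) : Finset (Sym2 V)) : Set (Sym2 V))).connectedComponentMk v)
        (fun v w h => ConnectedComponent.sound ((hiff v w).1 h))) ?_
    exact fun c => c.ind fun v => ⟨(fromEdgeSet (S : Set (Sym2 V))).connectedComponentMk v, rfl⟩

lemma kk_bridge (hab : a ≠ b) (he : s(a,b) ∈ S)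
    (hr : ¬ (fromEdgeSet ((S.erase s(a,b) : Finset (Sym2 V)) : Set (Sym2 V))).Reachable a b) :
    kk (S.erase s(a,b)) = kk S + 1 := by
  classical
  set G' := fromEdgeSet ((S.erase s(a,b) : Finset (Sym2 V)) : Set (Sym2 V)) with hG'
  set GS := fromEdgeSet (S : Set (Sym2 V)) with hGS
  have hle : G' ≤ GS := by
    apply fromEdgeSet_mono; intro e heq; simp only [Finset.coe_erase, Set.mem_diff] at heq
    exact_mod_cast heq.1
  -- the map from CC(G') to CC(GS)
  let φ : G'.ConnectedComponent → GS.ConnectedComponent :=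
    ConnectedComponent.map (Hom.ofLE hle)
  have hφmk : ∀ v : V, φ (G'.connectedComponentMk v) = GS.connectedComponentMk v := fun v => rfl
  -- bijection between {q // q ≠ mk' b} and CC(GS)
  have hbij : Function.Bijective (fun q : {q : G'.ConnectedComponent // q ≠ G'.connectedComponentMk b} => φ q.1) := by
    constructor
    · rintro ⟨q1, hq1⟩ ⟨q2, hq2⟩ hq
      refine q1.ind (fun v1 hq1 hq => ?_) hq1 hq
      refine q2.ind (fun v2 hq2 hq => ?_) hq2 hq
      simp only [hφmk, Subtype.mk.injEq] at hq ⊢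
      have hreach : GS.Reachable v1 v2 := ConnectedComponent.exact hq
      rw [reach_erase_iff hab he] at hreach
      rcases hreach with h1 | ⟨h1, h2⟩ | ⟨h1, h2⟩
      · exact ConnectedComponent.sound h1
      · exact absurd (ConnectedComponent.sound h2.symm) hq2
      · exact absurd (ConnectedComponent.sound h1) hq1
    · intro c
      refine c.ind (fun v => ?_)
      by_cases hv : G'.Reachable v b
      · refine ⟨⟨G'.connectedComponentMk a, ?_⟩, ?_⟩
        · intro hcon
          exact hr (ConnectedComponent.exact hcon)
        · simp only [hφmk]
          exact ConnectedComponent.sound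
            (((fromEdgeSet_adj _).2 ⟨he, hab⟩ : GS.Adj a b).reachable.trans (hv.mono hle).symm)
      · exact ⟨⟨G'.connectedComponentMk v, fun hcon => hv (ConnectedComponent.exact hcon)⟩, rfl⟩
  have hcard : Fintype.card {q : G'.ConnectedComponent // q ≠ G'.connectedComponentMk b} =
      Fintype.card GS.ConnectedComponent := Fintype.card_of_bijective hbij
  have hcard2 : Fintype.card {q : G'.ConnectedComponent // q ≠ G'.connectedComponentMk b} =
      Fintype.card G'.ConnectedComponent - 1 := by
    have := Fintype.card_subtype_compl (fun q : G'.ConnectedComponent => q = G'.connectedComponentMk b)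
    rw [Fintype.card_subtype_eq] at this
    exact this
  have hpos : 1 ≤ Fintype.card G'.ConnectedComponent :=
    Fintype.card_pos_iff.2 ⟨G'.connectedComponentMk b⟩
  unfold kk
  rw [hG'] at hcard hcard2 hpos
  rw [hGS] at hcard
  omega

lemma fromEdgeSet_erase_eq (e : Sym2 V) :
    fromEdgeSet ((S.erase e : Finset (Sym2 V)) : Set (Sym2 V)) =
      (fromEdgeSet (S : Set (Sym2 V))).deleteEdges {e} := by
  ext x y
  simp only [fromEdgeSet_adj, Finset.coe_erase, Set.mem_diff, Set.mem_singleton_iff,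
    deleteEdges_adj]
  tauto

lemma forest_formula : ∀ (S : Finset (Sym2 V)), (∀ e ∈ S, ¬ e.IsDiag) →
    (fromEdgeSet (S : Set (Sym2 V))).IsAcyclic → S.card + kk S = Fintype.card V := by
  intro S
  induction S using Finset.strongInduction with
  | _ S ih =>
    intro hdiag hacyc
    rcases S.eq_empty_or_nonempty with rfl | ⟨e, heS⟩
    · simp [kk_empty]
    · obtain ⟨a, b⟩ := e
      have hab : a ≠ b := fun h => hdiag _ heS (by simp [h])
      have hbridge := isAcyclic_iff_forall_adj_isBridge.1 hacyc
        ((fromEdgeSet_adj _).2 ⟨heS, hab⟩ : (fromEdgeSet (S : Set (Sym2 V))).Adj a b)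
      rw [isBridge_iff] at hbridge
      have hnr : ¬ (fromEdgeSet ((S.erase s(a,b) : Finset (Sym2 V)) : Set (Sym2 V))).Reachable a b := by
        rw [fromEdgeSet_erase_eq]
        intro h
        exact hbridge (by rw [SimpleGraph.deleteEdges] at h; exact h)
      have hsub : S.erase s(a,b) ⊂ S := Finset.erase_ssubset heS
      have hacyc' : (fromEdgeSet ((S.erase s(a,b) : Finset (Sym2 V)) : Set (Sym2 V))).IsAcyclic := by
        rw [fromEdgeSet_erase_eq]
        intro v p hp
        exact hacyc (p.mapLe (deleteEdges_le _)) (hp.mapLe _)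
      have := ih _ hsub (fun e' he' => hdiag e' (Finset.erase_subset _ _ he')) hacyc'
      have hk := kk_bridge hab heS hnr
      have hcard : (S.erase s(a,b)).card + 1 = S.card := Finset.card_erase_add_one heS
      omega

lemma exists_spanning : ∀ (S : Finset (Sym2 V)), (∀ e ∈ S, ¬ e.IsDiag) →
    ∃ B ⊆ S, (fromEdgeSet ((S \ B : Finset (Sym2 V)) : Set (Sym2 V))).IsAcyclic ∧
      B.card + Fintype.card V = S.card + kk S := by
  intro S
  induction S using Finset.strongInduction with
  | _ S ih =>
    intro hdiag
    by_cases hacyc : (fromEdgeSet (S : Set (Sym2 V))).IsAcyclic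
    · refine ⟨∅, Finset.empty_subset _, by simpa using hacyc, ?_⟩
      simp [forest_formula S hdiag hacyc]
    · rw [SimpleGraph.IsAcyclic] at hacyc
      push_neg at hacyc
      obtain ⟨v, c, hc⟩ := hacyc
      cases c with
      | nil => exact absurd hc (by simp [Walk.IsCycle])
      | @cons _ w _ hadj p =>
        have hvw : v ≠ w := hadj.ne
        have heS : s(v, w) ∈ S := ((fromEdgeSet_adj _).1 hadj).1
        have hnodup : s(v, w) ∉ p.edges := by
          have := hc.edges_nodup
          rw [Walk.edges_cons] at this
          exact (List.nodup_cons.1 this).1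
        have hreach : (fromEdgeSet ((S.erase s(v,w) : Finset (Sym2 V)) : Set (Sym2 V))).Reachable v w := by
          rw [fromEdgeSet_erase_eq]
          exact (Reachable.symm ⟨p.toDeleteEdges {s(v,w)} (fun e hep => by
            simp only [Set.mem_singleton_iff]
            exact fun h => hnodup (h ▸ hep))⟩)
        have hkk := kk_nonbridge hvw heS hreach
        obtain ⟨B', hB'sub, hB'acyc, hB'card⟩ := ih _ (Finset.erase_ssubset heS)
          (fun e he => hdiag e (Finset.erase_subset _ _ he))
        refine ⟨insert s(v,w) B', ?_, ?_, ?_⟩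
        · intro e he
          rcases Finset.mem_insert.1 he with rfl | he
          · exact heS
          · exact Finset.erase_subset _ _ (hB'sub he)
        · have hset : (S \ insert s(v,w) B' : Finset (Sym2 V)) = S.erase s(v,w) \ B' := by
            ext e
            simp only [Finset.mem_sdiff, Finset.mem_insert, Finset.mem_erase]
            tauto
          rw [hset]
          exact hB'acyc
        · have hnot : s(v,w) ∉ B' := fun h => (Finset.mem_erase.1 (hB'sub h)).1 rfl
          rw [Finset.card_insert_of_notMem hnot]
          have hce : (S.erase s(v,w)).card + 1 = S.card := Finset.card_erase_add_one heS
          omega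

lemma cyclomatic_eq (S : Finset (Sym2 V)) (hdiag : ∀ e ∈ S, ¬ e.IsDiag) :
    (sInf {k | ∃ B ⊆ S, B.card = k ∧
      (SimpleGraph.fromEdgeSet ((S \ B : Finset (Sym2 V)) : Set (Sym2 V))).IsAcyclic})
      + Fintype.card V = S.card + kk S := by
  obtain ⟨B, hBsub, hBacyc, hBcard⟩ := exists_spanning S hdiag
  have hmem : B.card ∈ {k | ∃ B ⊆ S, B.card = k ∧
      (SimpleGraph.fromEdgeSet ((S \ B : Finset (Sym2 V)) : Set (Sym2 V))).IsAcyclic} :=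
    ⟨B, hBsub, rfl, hBacyc⟩
  have hlb : ∀ k ∈ {k | ∃ B ⊆ S, B.card = k ∧
      (SimpleGraph.fromEdgeSet ((S \ B : Finset (Sym2 V)) : Set (Sym2 V))).IsAcyclic},
      B.card ≤ k := by
    rintro k ⟨C, hCsub, rfl, hCacyc⟩
    have hff := forest_formula (S \ C) (fun e he => hdiag e (Finset.mem_sdiff.1 he).1) hCacyc
    have hkk : kk S ≤ kk (S \ C) := kk_anti (Finset.sdiff_subset)
    have hcard : (S \ C).card = S.card - C.card := Finset.card_sdiff_of_subset hCsub
    have hle : C.card ≤ S.card := Finset.card_le_card hCsub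
    omega
  have : sInf {k | ∃ B ⊆ S, B.card = k ∧
      (SimpleGraph.fromEdgeSet ((S \ B : Finset (Sym2 V)) : Set (Sym2 V))).IsAcyclic} = B.card :=
    le_antisymm (Nat.sInf_le hmem) (le_csInf ⟨B.card, hmem⟩ hlb)
  omega

def inSuv' (A : Finset (Sym2 V)) (u v : V) : Prop :=
  ∀ w, Odd ((A.filter fun e => w ∈ e).card) ↔ (u ≠ v ∧ (w = u ∨ w = v))

lemma reach_of_inSuv {A : Finset (Sym2 V)} (hdiag : ∀ e ∈ A, ¬ e.IsDiag)
    {u v : V} (huv : u ≠ v) (h : inSuv' A u v) :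
    (fromEdgeSet (A : Set (Sym2 V))).Reachable u v := by
  classical
  by_contra hv
  set GA := fromEdgeSet (A : Set (Sym2 V)) with hGA
  set R : Finset V := Finset.univ.filter (fun w => GA.Reachable u w) with hR
  have hclosed : ∀ e ∈ A, ∀ i j : V, e = s(i,j) → (i ∈ R ↔ j ∈ R) := by
    intro e heA i j hij
    have hadj : GA.Adj i j := (fromEdgeSet_adj _).2 ⟨hij ▸ heA, fun hh => hdiag e heA (by simp [hij, hh])⟩
    simp only [hR, Finset.mem_filter, Finset.mem_univ, true_and]
    exact ⟨fun hr => hr.trans hadj.reachable, fun hr => hr.trans hadj.symm.reachable⟩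
  have hsum : ∑ w ∈ R, (A.filter fun e => w ∈ e).card = ∑ e ∈ A, (R.filter fun w => w ∈ e).card := by
    simp_rw [Finset.card_filter]
    rw [Finset.sum_comm]
  have heven : Even (∑ w ∈ R, (A.filter fun e => w ∈ e).card) := by
    rw [hsum]
    apply Finset.even_sum
    intro e heA
    obtain ⟨i, j⟩ := e
    have hij : i ≠ j := fun hh => hdiag _ heA (by simp [hh])
    by_cases hi : i ∈ R
    · have hj : j ∈ R := (hclosed _ heA i j rfl).1 hi
      have : R.filter (fun w => w ∈ s(i,j)) = {i, j} := by
        ext w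
        simp only [Finset.mem_filter, Sym2.mem_iff, Finset.mem_insert, Finset.mem_singleton]
        constructor
        · rintro ⟨_, h⟩; exact h
        · rintro (rfl | rfl)
          · exact ⟨hi, Or.inl rfl⟩
          · exact ⟨hj, Or.inr rfl⟩
      rw [this, Finset.card_pair hij]
      exact even_two
    · have hj : j ∉ R := fun hh => hi ((hclosed _ heA i j rfl).2 hh)
      have h0 : R.filter (fun w => w = i ∨ w = j) = ∅ := by
        ext w
        simp only [Finset.mem_filter, Finset.notMem_empty, iff_false, not_and]
        rintro hw (rfl | rfl) <;> [exact hi hw; exact hj hw]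
      simp only [Sym2.mem_iff]
      rw [h0]
      simp
  rw [Finset.even_sum_iff_even_card_odd] at heven
  have hfilter : R.filter (fun w => Odd ((A.filter fun e => w ∈ e).card)) = {u} := by
    ext w
    simp only [Finset.mem_filter, Finset.mem_singleton, h w, hR, Finset.mem_univ, true_and]
    constructor
    · rintro ⟨hw, _, (rfl | rfl)⟩
      · rfl
      · exact absurd hw hv
    · rintro rfl
      exact ⟨Reachable.refl _, huv, Or.inl rfl⟩
  rw [hfilter] at heven
  simp at heven

lemma kk_insert_eq {A : Finset (Sym2 V)} {u v : V} (huv : u ≠ v)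
    (hr : (fromEdgeSet (A : Set (Sym2 V))).Reachable u v) :
    kk (insert s(u,v) A) = kk A := by
  by_cases hmem : s(u,v) ∈ A
  · rw [Finset.insert_eq_self.2 hmem]
  · have h := kk_nonbridge huv (Finset.mem_insert_self s(u,v) A)
      (by rw [Finset.erase_insert hmem]; exact hr)
    rw [h, Finset.erase_insert hmem]

def sg (b : Bool) : ℝ := if b then 1 else -1

lemma dot_eq (n : ℕ) (p q : Fin n × Bool) :
    ∑ α, fcSpin n p α * fcSpin n q α =
      (if p.1 = q.1 then 1 else 0) * (sg p.2 * sg q.2) := by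
  unfold fcSpin sg
  rw [Finset.sum_eq_single p.1]
  · simp only [Pi.single_apply, if_pos rfl]
    by_cases h : p.1 = q.1 <;> simp [h] <;> ring
  · intro b _ hb
    simp [Pi.single_apply, hb]
  · simp

lemma prod_ite_pair (i j : V) (hij : i ≠ j) (f : V → ℝ) :
    (∏ w, f w ^ (if w ∈ s(i,j) then 1 else 0)) = f i * f j := by
  have h1 : ∀ w : V, f w ^ (if w ∈ s(i,j) then 1 else 0) = if w = i ∨ w = j then f w else 1 := by
    intro w; simp only [Sym2.mem_iff]; split_ifs <;> simp
  simp_rw [h1]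
  rw [← Finset.prod_filter]
  have h2 : Finset.univ.filter (fun w => w = i ∨ w = j) = {i, j} := by
    ext w; simp
  rw [h2, Finset.prod_pair hij]

lemma deg_insert {A : Finset (Sym2 V)} {e : Sym2 V} (he : e ∉ A) (w : V) :
    ((insert e A).filter fun e' => w ∈ e').card
      = (A.filter fun e' => w ∈ e').card + (if w ∈ e then 1 else 0) := by
  rw [Finset.filter_insert]
  split_ifs with h
  · rw [Finset.card_insert_of_notMem (fun hc => he (Finset.mem_filter.1 hc).1)]
  · simp

lemma prod_lift_mul (f : V → ℝ) :
    ∀ (A : Finset (Sym2 V)), (∀ e ∈ A, ¬ e.IsDiag) →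
    ∏ e ∈ A, Sym2.lift ⟨fun i j => f i * f j, fun i j => mul_comm _ _⟩ e
      = ∏ w, f w ^ ((A.filter fun e => w ∈ e).card) := by
  intro A
  induction A using Finset.induction_on with
  | empty => intro _; simp
  | @insert e A he ih =>
    intro hdiag
    obtain ⟨i, j⟩ := e
    have hij : i ≠ j := fun h => hdiag _ (Finset.mem_insert_self _ _) (by simp [h])
    rw [Finset.prod_insert he, ih (fun e' he' => hdiag e' (Finset.mem_insert_of_mem he'))]
    simp_rw [deg_insert he, pow_add]
    rw [Finset.prod_mul_distrib, prod_ite_pair i j hij f]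
    simp only [Sym2.lift_mk]
    ring

def chi {κ : Type*} [DecidableEq κ] (α : V → κ) (e : Sym2 V) : ℝ :=
  Sym2.lift ⟨fun i j => if α i = α j then 1 else 0, by
    intro i j
    show (if α i = α j then (1:ℝ) else 0) = (if α j = α i then 1 else 0)
    by_cases h : α i = α j
    · rw [if_pos h, if_pos h.symm]
    · rw [if_neg h, if_neg (fun hh => h hh.symm)]⟩ e

lemma chi_mk {κ : Type*} [DecidableEq κ] (α : V → κ) (i j : V) :
    chi α s(i,j) = if α i = α j then 1 else 0 := rfl

lemma chi_sq {κ : Type*} [DecidableEq κ] (α : V → κ) (e : Sym2 V) : chi α e * chi α e = chi α e := by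
  obtain ⟨i, j⟩ := e
  rw [chi_mk]
  split_ifs <;> ring

lemma chi_mul_prod {κ : Type*} [DecidableEq κ] (α : V → κ) (e0 : Sym2 V) (A : Finset (Sym2 V)) :
    chi α e0 * ∏ e ∈ A, chi α e = ∏ e ∈ insert e0 A, chi α e := by
  by_cases h : e0 ∈ A
  · rw [Finset.insert_eq_self.2 h]
    conv_rhs => rw [← Finset.insert_erase h]
    rw [Finset.prod_insert (Finset.notMem_erase _ _)]
    conv_lhs => rw [← Finset.insert_erase h, Finset.prod_insert (Finset.notMem_erase _ _)]
    rw [← mul_assoc, chi_sq]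
  · rw [Finset.prod_insert h]

open scoped Classical in
lemma chi_prod_eq {κ : Type*} [DecidableEq κ] (α : V → κ) (T : Finset (Sym2 V)) :
    ∏ e ∈ T, chi α e = if (∀ i j : V, s(i,j) ∈ T → α i = α j) then 1 else 0 := by
  by_cases hP : ∀ i j : V, s(i,j) ∈ T → α i = α j
  · rw [if_pos hP]
    apply Finset.prod_eq_one
    intro e he
    obtain ⟨i, j⟩ := e
    rw [chi_mk, if_pos (hP i j he)]
  · rw [if_neg hP]
    push_neg at hP
    obtain ⟨i, j, hij, hne⟩ := hP
    exact Finset.prod_eq_zero hij (by rw [chi_mk, if_neg hne])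

lemma colorsum (n : ℕ) (T : Finset (Sym2 V)) (hdiag : ∀ e ∈ T, ¬ e.IsDiag) :
    ∑ α : V → Fin n, ∏ e ∈ T, chi α e = (n : ℝ) ^ kk T := by
  classical
  simp_rw [chi_prod_eq]
  rw [Finset.sum_boole]
  set GT := fromEdgeSet (T : Set (Sym2 V)) with hGT
  have hwalk : ∀ (α : V → Fin n), (∀ i j : V, s(i,j) ∈ T → α i = α j) →
      ∀ (x y : V) (p : GT.Walk x y), α x = α y := by
    intro α hα x y p
    induction p with
    | nil => rfl
    | @cons x c y h p ih =>
      have := (fromEdgeSet_adj _).1 h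
      exact (hα x c this.1).trans ih
  have hequiv : {α : V → Fin n // ∀ i j : V, s(i,j) ∈ T → α i = α j} ≃
      (GT.ConnectedComponent → Fin n) := by
    refine ⟨fun a => ConnectedComponent.lift a.1 (fun x y p _ => hwalk a.1 a.2 x y p),
      fun g => ⟨fun v => g (GT.connectedComponentMk v), ?_⟩, fun a => ?_, fun g => ?_⟩
    · intro i j hij
      by_cases h : i = j
      · rw [h]
      · exact congrArg g (ConnectedComponent.sound
          ((fromEdgeSet_adj _).2 ⟨hij, h⟩ : GT.Adj i j).reachable)
    · exact Subtype.ext (funext fun v => rfl)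
    · exact funext fun c => c.ind (fun v => rfl)
  have hcard : (Finset.univ.filter (fun α : V → Fin n =>
      ∀ i j : V, s(i,j) ∈ T → α i = α j)).card = n ^ kk T := by
    rw [← Fintype.card_subtype]
    rw [Fintype.card_congr hequiv, Fintype.card_fun]
    simp [kk, hGT]
  rw [hcard]
  push_cast
  rfl

lemma signsum (d : V → ℕ) :
    ∑ b : V → Bool, ∏ w, sg (b w) ^ d w
      = if (∀ w, Even (d w)) then (2:ℝ) ^ Fintype.card V else 0 := by
  classical
  have h1 : ∑ b : V → Bool, ∏ w, sg (b w) ^ d w = ∏ w, ∑ c : Bool, sg c ^ d w := by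
    rw [Finset.prod_univ_sum]
    rw [Fintype.piFinset_univ]
  rw [h1]
  have h2 : ∀ w, ∑ c : Bool, sg c ^ d w = if Even (d w) then (2:ℝ) else 0 := by
    intro w
    rw [Fintype.sum_bool]
    have ht : sg true = 1 := rfl
    have hf : sg false = -1 := rfl
    rw [ht, hf]
    by_cases h : Even (d w)
    · rw [if_pos h, one_pow, h.neg_one_pow]; norm_num
    · rw [if_neg h, one_pow, (Nat.not_even_iff_odd.1 h).neg_one_pow]; norm_num
  simp_rw [h2]
  by_cases hall : ∀ w, Even (d w)
  · rw [if_pos hall]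
    rw [Finset.prod_congr rfl (fun w _ => if_pos (hall w))]
    simp
  · rw [if_neg hall]
    push_neg at hall
    obtain ⟨w, hw⟩ := hall
    exact Finset.prod_eq_zero (Finset.mem_univ w) (by rw [if_neg (by simpa using hw)])

lemma even_d_iff (A : Finset (Sym2 V)) (u v : V) :
    (∀ w, Even ((A.filter fun e => w ∈ e).card
        + (if w = u then 1 else 0) + (if w = v then 1 else 0)))
      ↔ (∀ w, Odd ((A.filter fun e => w ∈ e).card) ↔ (u ≠ v ∧ (w = u ∨ w = v))) := by
  constructor <;> intro h w <;> have hw := h w <;>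
    by_cases h1 : u = v <;> by_cases h2 : w = u <;> by_cases h3 : w = v <;>
    simp only [h1, h2, h3, if_true, if_false, ite_true, ite_false, ne_eq,
      not_true_eq_false, not_false_eq_true, true_and, false_and, true_or, or_true,
      or_false, false_or, iff_true, iff_false, Nat.even_iff, Nat.odd_iff,
      Nat.even_add_one, Nat.not_even_iff_odd] at hw ⊢ <;>
    try omega
  all_goals (try rw [if_neg (fun hh : v = u => h1 hh.symm)] at hw)
  all_goals (try rw [if_neg (fun hh : v = u => h1 hh.symm)])
  all_goals omega

lemma liftdot_split (n : ℕ) (σ : V → Fin n × Bool) (e : Sym2 V) :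
    Sym2.lift ⟨fun i j => ∑ α, fcSpin n (σ i) α * fcSpin n (σ j) α,
      fun i j => by simp [mul_comm]⟩ e
      = chi (fun i => (σ i).1) e *
        Sym2.lift ⟨fun i j => sg (σ i).2 * sg (σ j).2, fun i j => mul_comm _ _⟩ e := by
  obtain ⟨i, j⟩ := e
  simp only [Sym2.lift_mk, chi_mk]
  exact dot_eq n (σ i) (σ j)

lemma sign_combine (f : V → ℝ) (d0 : V → ℕ) (u v : V) :
    (∏ w, f w ^ d0 w) * (f u * f v)
      = ∏ w, f w ^ (d0 w + (if w = u then 1 else 0) + (if w = v then 1 else 0)) := by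
  simp_rw [pow_add]
  rw [Finset.prod_mul_distrib, Finset.prod_mul_distrib]
  have h1 : ∀ a : V, (∏ w, f w ^ (if w = a then 1 else 0)) = f a := by
    intro a
    have h2 : ∀ w, f w ^ (if w = a then 1 else 0) = if w = a then f w else 1 := by
      intro w; split_ifs <;> simp
    simp_rw [h2]
    rw [Finset.prod_ite_eq' Finset.univ a f]
    simp
  rw [h1 u, h1 v]; ring

lemma core (n : ℕ) (A : Finset (Sym2 V)) (hdiag : ∀ e ∈ A, ¬ e.IsDiag) (u v : V) :
    ∑ σ : V → Fin n × Bool,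
        (∑ α, fcSpin n (σ u) α * fcSpin n (σ v) α) *
        ∏ e ∈ A, Sym2.lift ⟨fun i j => ∑ α, fcSpin n (σ i) α * fcSpin n (σ j) α,
          fun i j => by simp [mul_comm]⟩ e
      = if (∀ w, Odd ((A.filter fun e => w ∈ e).card) ↔ (u ≠ v ∧ (w = u ∨ w = v)))
        then (2:ℝ) ^ Fintype.card V * (n:ℝ) ^ kk A else 0 := by
  classical
  simp_rw [liftdot_split n, dot_eq n, Finset.prod_mul_distrib,
    prod_lift_mul _ A hdiag]
  rw [← Equiv.sum_comp (Equiv.arrowProdEquivProdArrow V (fun _ => Fin n) (fun _ => Bool)).symm]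
  rw [Fintype.sum_prod_type]
  simp only [Equiv.arrowProdEquivProdArrow, Equiv.coe_fn_symm_mk]
  have hsum2 : ∀ (α : V → Fin n) (b : V → Bool),
      ((if α u = α v then (1:ℝ) else 0) * (sg (b u) * sg (b v))) *
        ((∏ e ∈ A, chi α e) * ∏ w, sg (b w) ^ (A.filter fun e => w ∈ e).card)
      = ((if α u = α v then (1:ℝ) else 0) * ∏ e ∈ A, chi α e) *
          ∏ w, sg (b w) ^ ((A.filter fun e => w ∈ e).card
            + (if w = u then 1 else 0) + (if w = v then 1 else 0)) := by
    intro α b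
    rw [← sign_combine (fun w => sg (b w))]
    ring
  refine Eq.trans (Finset.sum_congr rfl (fun α _ => Finset.sum_congr rfl (fun b _ => hsum2 α b))) ?_
  simp_rw [← Finset.mul_sum]
  rw [← Finset.sum_mul]
  rw [signsum (fun w => (A.filter fun e => w ∈ e).card
      + (if w = u then 1 else 0) + (if w = v then 1 else 0))]
  have hX : (∑ α : V → Fin n, (if α u = α v then (1:ℝ) else 0) * ∏ e ∈ A, chi α e)
      = (n:ℝ) ^ kk (if u = v then A else insert s(u,v) A) := by
    by_cases huv : u = v
    · subst huv
      simp only [if_pos trivial, one_mul]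
      exact colorsum n A hdiag
    · rw [if_neg huv]
      have h3 : ∀ α : V → Fin n, (if α u = α v then (1:ℝ) else 0) = chi α s(u,v) :=
        fun α => (chi_mk α u v).symm
      simp_rw [h3, chi_mul_prod]
      refine colorsum n _ (fun e he => ?_)
      rcases Finset.mem_insert.1 he with rfl | he
      · simpa using huv
      · exact hdiag e he
  rw [hX]
  by_cases hcond : ∀ w, Odd ((A.filter fun e => w ∈ e).card) ↔ (u ≠ v ∧ (w = u ∨ w = v))
  · rw [if_pos ((even_d_iff A u v).2 hcond), if_pos hcond]
    by_cases huv : u = v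
    · rw [if_pos huv]; ring
    · rw [if_neg huv, kk_insert_eq huv (reach_of_inSuv hdiag huv hcond)]; ring
  · rw [if_neg (fun h => hcond ((even_d_iff A u v).1 h)), if_neg hcond, mul_zero]


end Erase
end Aux

/-- Let `G = (V, E)` be a finite graph of maximum degree 3, `n` a positive integer and
`x` real.  If the spins `(s_i)_{i ∈ V}` are i.i.d. with the face-cubic a priori measure
and `M = Σ_{i ∈ V} s_i`, then
`E[|M|² ∏_{ij ∈ E} (1 + n x s_i · s_j)] = Σ_{(A,u,v) ∈ S(G)} x^{|A|} n^{c(A)}`. -/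
theorem face_cubic_magnetization_expansion
    [Fintype V] [DecidableEq V] (G : SimpleGraph V) [DecidableRel G.Adj]
    (hdeg : ∀ w, G.degree w ≤ 3)
    (n : ℕ) (hn : 0 < n) (x : ℝ) :
    (1 / (2 * n : ℝ)) ^ Fintype.card V *
      ∑ σ : V → Fin n × Bool,
        (∑ α, (∑ i, fcSpin n (σ i) α) ^ 2) *
        ∏ e ∈ G.edgeFinset,
          Sym2.lift ⟨fun i j => 1 + (n : ℝ) * x * ∑ α, fcSpin n (σ i) α * fcSpin n (σ j) α,
            fun i j => by simp [mul_comm]⟩ e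
      = ∑ p ∈ SGfinset G, x ^ p.1.card * (n : ℝ) ^ cyclomatic p.1 := by
  classical
  have hdiagE : ∀ A : Finset (Sym2 V), A ∈ G.edgeFinset.powerset → ∀ e ∈ A, ¬ e.IsDiag := by
    intro A hA e he
    exact SimpleGraph.not_isDiag_of_mem_edgeSet G
      (SimpleGraph.mem_edgeFinset.1 (Finset.mem_powerset.1 hA he))
  have hM : ∀ σ : V → Fin n × Bool,
      (∑ α, (∑ i, fcSpin n (σ i) α) ^ 2)
        = ∑ u, ∑ v, ∑ α, fcSpin n (σ u) α * fcSpin n (σ v) α := by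
    intro σ
    simp_rw [sq, Finset.sum_mul_sum]
    rw [Finset.sum_comm]
    exact Finset.sum_congr rfl fun u _ => Finset.sum_comm
  have hE : ∀ σ : V → Fin n × Bool,
      (∏ e ∈ G.edgeFinset,
        Sym2.lift ⟨fun i j => 1 + (n : ℝ) * x * ∑ α, fcSpin n (σ i) α * fcSpin n (σ j) α,
          fun i j => by simp [mul_comm]⟩ e)
      = ∑ A ∈ G.edgeFinset.powerset, ((n:ℝ)*x) ^ A.card *
          ∏ e ∈ A, Sym2.lift ⟨fun i j => ∑ α, fcSpin n (σ i) α * fcSpin n (σ j) α,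
            fun i j => by simp [mul_comm]⟩ e := by
    intro σ
    have h1 : ∀ e ∈ G.edgeFinset,
        Sym2.lift ⟨fun i j => 1 + (n : ℝ) * x * ∑ α, fcSpin n (σ i) α * fcSpin n (σ j) α,
          fun i j => by simp [mul_comm]⟩ e
        = ((n:ℝ)*x) * Sym2.lift ⟨fun i j => ∑ α, fcSpin n (σ i) α * fcSpin n (σ j) α,
            fun i j => by simp [mul_comm]⟩ e + 1 := by
      intro e _
      obtain ⟨i, j⟩ := e
      simp only [Sym2.lift_mk]
      ring
    rw [Finset.prod_congr rfl h1, Finset.prod_add]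
    refine Finset.sum_congr rfl fun A hA => ?_
    rw [Finset.prod_const_one, mul_one, Finset.prod_mul_distrib, Finset.prod_const]
  have hsummand : ∀ σ : V → Fin n × Bool,
      (∑ α, (∑ i, fcSpin n (σ i) α) ^ 2) *
        ∏ e ∈ G.edgeFinset,
          Sym2.lift ⟨fun i j => 1 + (n : ℝ) * x * ∑ α, fcSpin n (σ i) α * fcSpin n (σ j) α,
            fun i j => by simp [mul_comm]⟩ e
      = ∑ A ∈ G.edgeFinset.powerset, ∑ u, ∑ v,
          ((n:ℝ)*x) ^ A.card *
          ((∑ α, fcSpin n (σ u) α * fcSpin n (σ v) α) *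
           ∏ e ∈ A, Sym2.lift ⟨fun i j => ∑ α, fcSpin n (σ i) α * fcSpin n (σ j) α,
             fun i j => by simp [mul_comm]⟩ e) := by
    intro σ
    rw [hM σ, hE σ, Finset.sum_mul_sum, Finset.sum_comm]
    refine Finset.sum_congr rfl fun A hA => Finset.sum_congr rfl fun u _ => ?_
    rw [Finset.sum_mul]
    exact Finset.sum_congr rfl fun v _ => by ring
  rw [Finset.sum_congr rfl (fun σ _ => hsummand σ)]
  rw [Finset.sum_comm, Finset.mul_sum]
  rw [SGfinset, Finset.sum_filter, Finset.sum_product]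
  refine Finset.sum_congr rfl fun A hA => ?_
  rw [Finset.sum_comm, Finset.mul_sum]
  rw [Finset.sum_product]
  refine Finset.sum_congr rfl fun u _ => ?_
  rw [Finset.sum_comm, Finset.mul_sum]
  refine Finset.sum_congr rfl fun v _ => ?_
  rw [← Finset.mul_sum, core n A (hdiagE A hA) u v]
  have hn0 : (n:ℝ) ≠ 0 := Nat.cast_ne_zero.2 hn.ne'
  have hcyc : cyclomatic A + Fintype.card V = A.card + kk A := cyclomatic_eq A (hdiagE A hA)
  by_cases hcond : inSuv A u v
  · have hcond' : (∀ w, Odd ((A.filter fun e => w ∈ e).card) ↔ (u ≠ v ∧ (w = u ∨ w = v))) := hcond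
    rw [if_pos hcond', if_pos hcond]
    have hpow : ((n:ℝ))^A.card * (n:ℝ)^kk A = (n:ℝ)^(cyclomatic A) * (n:ℝ)^(Fintype.card V) := by
      rw [← pow_add, ← pow_add, ← hcyc]
    have hone : ((1:ℝ)/(2*n))^(Fintype.card V) * 2^(Fintype.card V) * (n:ℝ)^(Fintype.card V) = 1 := by
      rw [← mul_pow, ← mul_pow, show (1:ℝ)/(2*n) * 2 * n = 1 from by field_simp]
      exact one_pow _
    have key : ((1:ℝ)/(2*n))^(Fintype.card V) * (((n:ℝ)*x)^A.card *
        ((2:ℝ)^(Fintype.card V) * (n:ℝ)^kk A))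
        = x^A.card * (((n:ℝ)^A.card * (n:ℝ)^kk A) *
            (((1:ℝ)/(2*n))^(Fintype.card V) * 2^(Fintype.card V))) := by
      rw [mul_pow]; ring
    rw [key, hpow]
    rw [show (n:ℝ)^(cyclomatic A) * (n:ℝ)^(Fintype.card V) *
        (((1:ℝ)/(2*n))^(Fintype.card V) * 2^(Fintype.card V))
        = x^0 * ((n:ℝ)^(cyclomatic A) * (((1:ℝ)/(2*n))^(Fintype.card V) * 2^(Fintype.card V) *
          (n:ℝ)^(Fintype.card V))) from by ring, hone]
    ring
  · have hcond' : ¬ (∀ w, Odd ((A.filter fun e => w ∈ e).card) ↔ (u ≠ v ∧ (w = u ∨ w = v))) := hcond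
    rw [if_neg hcond', if_neg hcond]
    ring
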